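/- arXiv:1907.03025 — 2 statements merged into one kernel-verified Lean document; each statement's English description precedes it below -/
import Mathlib

section
/- Let ε ∈ ℝⁿ be a vector of independent, mean-zero errors, each subgaussian with constant σ, let 0 < a < 1, and let H be an n×n orthogonal projection matrix with trace(H) = m. Then E exp( (a/(2σ²)) εᵀHε ) ≤ exp( −(m/2) log(1−a) ). -/
open MeasureTheory Real Matrix Finset Filter ProbabilityTheory

noncomputable section

/-- The `ℓ∞` norm of a finite vector. -/
def linf {ι : Type*} [Fintype ι] (v : ι → ℝ) : ℝ := ⨆ j, |v j|

/-- The `ℓq` norm of a finite vector. -/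
def lqnorm {ι : Type*} [Fintype ι] (q : ℝ) (v : ι → ℝ) : ℝ :=
  (∑ j, |v j| ^ q) ^ (1 / q)

/-- The `ℓ1` norm of a finite vector. -/
def l1 {ι : Type*} [Fintype ι] (v : ι → ℝ) : ℝ := ∑ j, |v j|

/-- The `ℓ1` norm of a vector restricted to coordinates in a finite set. -/
def l1on {ι : Type*} (J : Finset ι) (v : ι → ℝ) : ℝ := ∑ j ∈ J, |v j|

/-- The squared euclidean norm of a finite vector. -/
def sq2 {ι : Type*} [Fintype ι] (v : ι → ℝ) : ℝ := ∑ i, v i ^ 2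

/-- The support of a vector, as a finite set of coordinates. -/
def suppF {p : ℕ} (v : Fin p → ℝ) : Finset (Fin p) :=
  Finset.univ.filter fun j => v j ≠ 0

/-- The minimal absolute value of a vector over its support (`β°_min`). -/
def bmin {p : ℕ} (v : Fin p → ℝ) : ℝ :=
  sInf ((fun j => |v j|) '' (suppF v : Set (Fin p)))

/-- The submatrix of `X` consisting of the columns indexed by `J`. -/
def colsub {n p : ℕ} (X : Matrix (Fin n) (Fin p) ℝ) (J : Finset (Fin p)) :
    Matrix (Fin n) J ℝ := Matrix.of fun i j => X i j.1

/-- The orthogonal projection `H_J = X_J (X_Jᵀ X_J)⁻¹ X_Jᵀ`. -/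
def proj {n p : ℕ} (X : Matrix (Fin n) (Fin p) ℝ) (J : Finset (Fin p)) :
    Matrix (Fin n) (Fin n) ℝ :=
  colsub X J * ((colsub X J)ᵀ * colsub X J)⁻¹ * (colsub X J)ᵀ

/-- The quadratic form `vᵀ H v`. -/
def quadf {n : ℕ} (H : Matrix (Fin n) (Fin n) ℝ) (v : Fin n → ℝ) : ℝ :=
  v ⬝ᵥ (H *ᵥ v)

/-- `δ_k = min_{J ⊂ T, |T∖J| = k} ‖(I − H_J) X_T β°_T‖²` (note `X_T β°_T = X β°`). -/
def deltaK {n p : ℕ} (X : Matrix (Fin n) (Fin p) ℝ) (β0 : Fin p → ℝ) (k : ℕ) : ℝ :=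
  sInf {d | ∃ J ⊆ suppF β0, (suppF β0 \ J).card = k ∧
        d = sq2 ((1 - proj X J) *ᵥ (X *ᵥ β0))}

/-- The scaled Kullback–Leibler distance `δ = min_{1 ≤ k ≤ t−1} δ_k / k`. -/
def deltaKL {n p : ℕ} (X : Matrix (Fin n) (Fin p) ℝ) (β0 : Fin p → ℝ) : ℝ :=
  sInf {d | ∃ k, 1 ≤ k ∧ k ≤ (suppF β0).card - 1 ∧ d = deltaK X β0 k / k}

/-- The set `𝔹`: union over sparse supersets `J ⊇ T` of the balls
`{β_J : ‖X_J(β°_J − β_J)‖² ≤ δ_{t−1}}`. -/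
def bigBall {n p : ℕ} (X : Matrix (Fin n) (Fin p) ℝ) (β0 : Fin p → ℝ) (tbar : ℕ) :
    Set (Fin p → ℝ) :=
  {β | ∃ J : Finset (Fin p), suppF β0 ⊆ J ∧ (colsub X J).rank = J.card ∧
        J.card ≤ tbar ∧ (∀ j ∉ J, β j = 0) ∧
        sq2 (X *ᵥ (β0 - β)) ≤ deltaK X β0 ((suppF β0).card - 1)}

/-- The GLM loss `ℓ(β) = Σ_i [γ(x_iᵀβ) − y_i x_iᵀβ]`. -/
def glmLoss {n p : ℕ} (X : Matrix (Fin n) (Fin p) ℝ) (γ : ℝ → ℝ) (yv : Fin n → ℝ)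
    (β : Fin p → ℝ) : ℝ := ∑ i, (γ ((X *ᵥ β) i) - yv i * (X *ᵥ β) i)

/-- The total cumulant `g(β) = Σ_i γ(x_iᵀβ)`. -/
def totalCum {n p : ℕ} (X : Matrix (Fin n) (Fin p) ℝ) (γ : ℝ → ℝ) (β : Fin p → ℝ) : ℝ :=
  ∑ i, γ ((X *ᵥ β) i)

/-- `γ⃗'(Xβ)`, the coordinatewise derivative of the cumulant at `Xβ`. -/
def gdot {n p : ℕ} (X : Matrix (Fin n) (Fin p) ℝ) (γ : ℝ → ℝ) (β : Fin p → ℝ) :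
    Fin n → ℝ := fun i => deriv γ ((X *ᵥ β) i)

/-- The signed pseudo-cone `C_a`. -/
def cone {n p : ℕ} (X : Matrix (Fin n) (Fin p) ℝ) (γ : ℝ → ℝ) (β0 : Fin p → ℝ)
    (a : ℝ) : Set (Fin p → ℝ) :=
  {ν | l1on (suppF β0)ᶜ ν ≤ (1 + a) / (1 - a) * l1on (suppF β0) ν ∧
       ∀ j ∉ suppF β0, ν j * (Xᵀ *ᵥ (gdot X γ (β0 + ν) - gdot X γ β0)) j ≤ 0}

/-- The sign-restricted pseudo-cone invertibility factor `ζ_{a,q}`. -/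
def zetaq {n p : ℕ} (X : Matrix (Fin n) (Fin p) ℝ) (γ : ℝ → ℝ) (β0 : Fin p → ℝ)
    (a q : ℝ) : ℝ :=
  sInf {z | ∃ ν ∈ cone X γ β0 a, ν ≠ 0 ∧
        z = linf (Xᵀ *ᵥ (gdot X γ (β0 + ν) - gdot X γ β0)) / lqnorm q ν}

/-- The sign-restricted pseudo-cone invertibility factor `ζ_a = ζ_{a,∞}`. -/
def zetaInf {n p : ℕ} (X : Matrix (Fin n) (Fin p) ℝ) (γ : ℝ → ℝ) (β0 : Fin p → ℝ)
    (a : ℝ) : ℝ :=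
  sInf {z | ∃ ν ∈ cone X γ β0 a, ν ≠ 0 ∧
        z = linf (Xᵀ *ᵥ (gdot X γ (β0 + ν) - gdot X γ β0)) / linf ν}

/-- `ℓ_J`: the minimal GLM loss over vectors supported on `J`. -/
def lossJ {n p : ℕ} (X : Matrix (Fin n) (Fin p) ℝ) (γ : ℝ → ℝ) (yv : Fin n → ℝ)
    (J : Finset (Fin p)) : ℝ :=
  sInf (glmLoss X γ yv '' {β | ∀ j ∉ J, β j = 0})

/-- The nested family `𝒥` of the Screening–Selection procedure: the prefixes of an
ordering of the nonzero Lasso coefficients by decreasing absolute values. -/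
def fam {p : ℕ} (b : Fin p → ℝ) : Set (Finset (Fin p)) :=
  {J | J.Nonempty ∧ J ⊆ suppF b ∧ ∀ j ∈ J, ∀ k ∈ suppF b \ J, |b k| ≤ |b j|}

/-- The quadratic (linear-model) loss `ℓ(β) = ‖y − Xβ‖²/2`. -/
def quadLoss {n p : ℕ} (X : Matrix (Fin n) (Fin p) ℝ) (yv : Fin n → ℝ)
    (β : Fin p → ℝ) : ℝ := sq2 (yv - X *ᵥ β) / 2

/-- `ℓ_J` for the quadratic loss. -/
def lossJQ {n p : ℕ} (X : Matrix (Fin n) (Fin p) ℝ) (yv : Fin n → ℝ)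
    (J : Finset (Fin p)) : ℝ :=
  sInf (quadLoss X yv '' {β | ∀ j ∉ J, β j = 0})

/-- `ζ_a` specialized to the linear model. -/
def zetaLin {n p : ℕ} (X : Matrix (Fin n) (Fin p) ℝ) (β0 : Fin p → ℝ) (a : ℝ) : ℝ :=
  sInf {z | ∃ ν : Fin p → ℝ, ν ≠ 0 ∧
        l1on (suppF β0)ᶜ ν ≤ (1 + a) / (1 - a) * l1on (suppF β0) ν ∧
        (∀ j ∉ suppF β0, ν j * (Xᵀ *ᵥ (X *ᵥ ν)) j ≤ 0) ∧
        z = linf (Xᵀ *ᵥ (X *ᵥ ν)) / linf ν}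

/-- The general convex-contrast loss `ℓ(β) = Σ_i φ(βᵀx_i, y_i)`. -/
def conLoss {n p : ℕ} (X : Matrix (Fin n) (Fin p) ℝ) (φ : ℝ → ℝ → ℝ) (yv : Fin n → ℝ)
    (β : Fin p → ℝ) : ℝ := ∑ i, φ ((X *ᵥ β) i) (yv i)

/-- The expected convex-contrast loss `E ℓ(β)`. -/
def eLoss {n p : ℕ} {Ω : Type*} [MeasurableSpace Ω] (μ : Measure Ω)
    (X : Matrix (Fin n) (Fin p) ℝ) (φ : ℝ → ℝ → ℝ) (y : Ω → Fin n → ℝ)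
    (β : Fin p → ℝ) : ℝ := ∫ ω, conLoss X φ (y ω) β ∂μ

/-- The empirical process `Z(r)` over the `ℓ1`-ball `B₁(r)`. -/
def Zproc {n p : ℕ} {Ω : Type*} [MeasurableSpace Ω] (μ : Measure Ω)
    (X : Matrix (Fin n) (Fin p) ℝ) (φ : ℝ → ℝ → ℝ) (y : Ω → Fin n → ℝ)
    (β0 : Fin p → ℝ) (r : ℝ) (ω : Ω) : ℝ :=
  sSup ((fun β => |conLoss X φ (y ω) β - eLoss μ X φ y β -
      (conLoss X φ (y ω) β0 - eLoss μ X φ y β0)|) '' {β | l1 (β - β0) ≤ r})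

/-- The empirical process `U_J(r)` over the ball `B_{2,J}(r)`. -/
def Uproc {n p : ℕ} {Ω : Type*} [MeasurableSpace Ω] (μ : Measure Ω)
    (X : Matrix (Fin n) (Fin p) ℝ) (φ : ℝ → ℝ → ℝ) (y : Ω → Fin n → ℝ)
    (β0 : Fin p → ℝ) (J : Finset (Fin p)) (r : ℝ) (ω : Ω) : ℝ :=
  sSup ((fun β => |conLoss X φ (y ω) β - eLoss μ X φ y β -
      (conLoss X φ (y ω) β0 - eLoss μ X φ y β0)|) ''
      {β | (∀ j ∉ J, β j = 0) ∧ sq2 (X *ᵥ (β0 - β)) ≤ r ^ 2})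

/-- The compatibility factor `κ_a`. -/
def kappa {n p : ℕ} (X : Matrix (Fin n) (Fin p) ℝ) (β0 : Fin p → ℝ) (a : ℝ) : ℝ :=
  sInf {z | ∃ ν : Fin p → ℝ, ν ≠ 0 ∧
        l1on (suppF β0)ᶜ ν ≤ (1 + a) / (1 - a) * l1on (suppF β0) ν ∧
        z = sq2 (X *ᵥ ν) / (l1on (suppF β0) ν) ^ 2}




/-- standard gaussian density -/
def gφ (u : ℝ) : ℝ := (Real.sqrt (2 * π))⁻¹ * Real.exp (-(u ^ 2) / 2)

lemma gφ_pos (u : ℝ) : 0 < gφ u :=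
  mul_pos (inv_pos.mpr (Real.sqrt_pos.mpr (by positivity))) (exp_pos _)

lemma gφ_continuous : Continuous gφ := by
  unfold gφ
  fun_prop

lemma gauss_point {b : ℝ} (hb : b < 1/2) (c x : ℝ) :
    gφ x * exp (c * x + b * x ^ 2) =
      (Real.sqrt (2 * π))⁻¹ * exp (c ^ 2 / (2 * (1 - 2 * b))) *
        exp (-((1 - 2 * b) / 2) * (x - c / (1 - 2 * b)) ^ 2) := by
  have h : (1 : ℝ) - 2 * b ≠ 0 := by linarith
  unfold gφ
  rw [mul_assoc, ← Real.exp_add, mul_assoc, ← Real.exp_add]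
  congr 2
  field_simp
  ring

lemma gauss_integrable {b : ℝ} (hb : b < 1/2) (c : ℝ) :
    Integrable (fun x : ℝ => gφ x * exp (c * x + b * x ^ 2)) := by
  have h1 : (0:ℝ) < (1 - 2 * b) / 2 := by linarith
  have h2 := ((integrable_exp_neg_mul_sq h1).comp_sub_right (c / (1 - 2 * b))).const_mul
    ((Real.sqrt (2 * π))⁻¹ * exp (c ^ 2 / (2 * (1 - 2 * b))))
  exact h2.congr (ae_of_all _ fun x => (gauss_point hb c x).symm)

lemma gauss_integral {b : ℝ} (hb : b < 1/2) (c : ℝ) :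
    ∫ x : ℝ, gφ x * exp (c * x + b * x ^ 2) =
      (Real.sqrt (1 - 2 * b))⁻¹ * exp (c ^ 2 / (2 * (1 - 2 * b))) := by
  have h1 : (0:ℝ) < (1 - 2 * b) / 2 := by linarith
  have h1' : (0:ℝ) < 1 - 2 * b := by linarith
  simp_rw [gauss_point hb c]
  rw [MeasureTheory.integral_const_mul]
  have h3 : (∫ x : ℝ, exp (-((1 - 2 * b) / 2) * (x - c / (1 - 2 * b)) ^ 2))
      = Real.sqrt (π / ((1 - 2 * b) / 2)) := by
    rw [← integral_gaussian ((1 - 2 * b) / 2)]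
    exact integral_sub_right_eq_self (fun x => exp (-((1 - 2 * b) / 2) * x ^ 2)) (c / (1 - 2 * b))
  rw [h3]
  have h4 : Real.sqrt (π / ((1 - 2 * b) / 2)) = Real.sqrt (2 * π) / Real.sqrt (1 - 2 * b) := by
    rw [show π / ((1 - 2 * b) / 2) = 2 * π / (1 - 2 * b) by field_simp]
    exact Real.sqrt_div (by positivity) _
  rw [h4]
  have h5 : Real.sqrt (2 * π) ≠ 0 := by positivity
  field_simp

lemma gauss_lintegral {n : ℕ} (b c : Fin n → ℝ) (hb : ∀ k, b k < 1/2) :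
    ∫⁻ x : Fin n → ℝ, ENNReal.ofReal (∏ k, gφ (x k) * exp (c k * x k + b k * x k ^ 2)) =
      ENNReal.ofReal (∏ k, (Real.sqrt (1 - 2 * b k))⁻¹ * exp (c k ^ 2 / (2 * (1 - 2 * b k)))) := by
  have hint : Integrable (fun x : Fin n → ℝ => ∏ k, gφ (x k) * exp (c k * x k + b k * x k ^ 2)) :=
    Integrable.fintype_prod (𝕜 := ℝ) (f := fun k x => gφ x * exp (c k * x + b k * x ^ 2))
      fun k => gauss_integrable (hb k) (c k)
  rw [← MeasureTheory.ofReal_integral_eq_lintegral_ofReal hint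
      (ae_of_all _ fun x => Finset.prod_nonneg fun k _ =>
        mul_nonneg (gφ_pos _).le (exp_pos _).le)]
  rw [volume_pi, MeasureTheory.integral_fintype_prod_eq_prod (𝕜 := ℝ)
      (fun k x => gφ x * exp (c k * x + b k * x ^ 2))]
  congr 1
  exact Finset.prod_congr rfl fun k _ => gauss_integral (hb k) (c k)


lemma linearize {n : ℕ} {s t : ℝ} (hst : s ^ 2 / 2 = t) (w : Fin n → ℝ) :
    (∫⁻ x : Fin n → ℝ, ENNReal.ofReal (∏ k, gφ (x k) * exp ((s * w k) * x k + 0 * x k ^ 2)))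
      = ENNReal.ofReal (exp (t * ∑ k, w k ^ 2)) := by
  rw [gauss_lintegral (fun _ => 0) (fun k => s * w k) (fun _ => by norm_num)]
  congr 1
  have h : ∀ k : Fin n, (Real.sqrt (1 - 2 * (0:ℝ)))⁻¹ *
      exp ((s * w k) ^ 2 / (2 * (1 - 2 * (0:ℝ)))) = exp (t * w k ^ 2) := by
    intro k
    rw [← hst]
    norm_num [Real.sqrt_one]
    congr 1
    ring
  rw [Finset.prod_congr rfl (fun k _ => h k), ← Real.exp_sum]
  congr 1
  rw [Finset.mul_sum]

lemma quadGaussEval {n : ℕ} {a : ℝ} (ha1 : a < 1) (lam : Fin n → ℝ)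
    (hlam : ∀ k, lam k = 0 ∨ lam k = 1) :
    (∫⁻ y : Fin n → ℝ, ENNReal.ofReal (∏ k, gφ (y k) * exp (0 * y k + (a/2 * lam k) * y k ^ 2)))
      = ENNReal.ofReal ((Real.sqrt (1 - a))⁻¹ ^
          (Finset.univ.filter (fun k => lam k = 1)).card) := by
  have hb : ∀ k, a/2 * lam k < 1/2 := by
    intro k
    rcases hlam k with h | h <;> rw [h] <;> [norm_num; linarith]
  rw [gauss_lintegral (fun k => a/2 * lam k) (fun _ => 0) hb]
  congr 1
  have h : ∀ k : Fin n, (Real.sqrt (1 - 2 * (a/2 * lam k)))⁻¹ *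
      exp ((0:ℝ) ^ 2 / (2 * (1 - 2 * (a/2 * lam k)))) =
      (if lam k = 1 then (Real.sqrt (1 - a))⁻¹ else 1) := by
    intro k
    rcases hlam k with h | h
    · rw [h]
      norm_num [Real.sqrt_one]
    · rw [h, show 1 - 2 * (a/2 * 1) = 1 - a by ring]
      norm_num
  rw [Finset.prod_congr rfl (fun k _ => h k),
    ← Finset.prod_filter_mul_prod_filter_not Finset.univ (fun k => lam k = 1)]
  rw [Finset.prod_congr rfl (fun k hk => if_pos (Finset.mem_filter.mp hk).2),
    Finset.prod_congr rfl (fun k hk => if_neg (Finset.mem_filter.mp hk).2),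
    Finset.prod_const, Finset.prod_const_one, mul_one]

lemma conj_dot {n : ℕ} (A V : Matrix (Fin n) (Fin n) ℝ) (y : Fin n → ℝ) :
    (V *ᵥ y) ⬝ᵥ (A *ᵥ (V *ᵥ y)) = y ⬝ᵥ ((Vᵀ * A * V) *ᵥ y) := by
  nth_rewrite 1 [show V *ᵥ y = Matrix.vecMul y Vᵀ from (Matrix.vecMul_transpose V y).symm]
  rw [Matrix.mulVec_mulVec, ← Matrix.dotProduct_mulVec, Matrix.mulVec_mulVec, ← Matrix.mul_assoc]

lemma quad_eq_sumsq {n : ℕ} {H : Matrix (Fin n) (Fin n) ℝ} (hs : Hᵀ = H) (hi : H * H = H)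
    (v : Fin n → ℝ) : quadf H v = ∑ k, (H *ᵥ v) k ^ 2 := by
  have h1 : ∑ k, (H *ᵥ v) k ^ 2 = (H *ᵥ v) ⬝ᵥ (H *ᵥ v) := by
    simp [dotProduct, pow_two]
  rw [h1]
  nth_rewrite 1 [show H *ᵥ v = Matrix.vecMul v Hᵀ from (Matrix.vecMul_transpose H v).symm]
  rw [← Matrix.dotProduct_mulVec, Matrix.mulVec_mulVec, hs, hi]
  rfl

lemma pair_swap {n : ℕ} {H : Matrix (Fin n) (Fin n) ℝ} (hs : Hᵀ = H) (v x : Fin n → ℝ) :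
    ∑ k, (H *ᵥ v) k * x k = ∑ j, (H *ᵥ x) j * v j := by
  have h1 : ∑ k, (H *ᵥ v) k * x k = (H *ᵥ v) ⬝ᵥ x := rfl
  have h2 : ∑ j, (H *ᵥ x) j * v j = (H *ᵥ x) ⬝ᵥ v := rfl
  rw [h1, h2, dotProduct_comm, Matrix.dotProduct_mulVec, ← Matrix.mulVec_transpose, hs]

lemma prod_gφ {n : ℕ} (v : Fin n → ℝ) :
    ∏ k, gφ (v k) = ((Real.sqrt (2 * π))⁻¹) ^ n * exp (-(∑ k, v k ^ 2) / 2) := by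
  unfold gφ
  rw [Finset.prod_mul_distrib, Finset.prod_const, Finset.card_univ, Fintype.card_fin,
    ← Real.exp_sum]
  congr 1
  rw [← Finset.sum_div]
  congr 1
  rw [← Finset.sum_neg_distrib]



/-- Lemma 2 (ii): moment generating function bound for a subgaussian
quadratic form. -/
theorem subgaussian_quadratic_mgf {n : ℕ} {Ω : Type*} [MeasurableSpace Ω]
    (μ : Measure Ω) [IsProbabilityMeasure μ]
    (ε : Fin n → Ω → ℝ) (hmeas : ∀ i, Measurable (ε i))
    (hindep : iIndepFun ε μ)
    (hmean : ∀ i, ∫ ω, ε i ω ∂μ = 0)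
    (σ : ℝ) (hσ : 0 < σ)
    (hsub : ∀ i u, ∫ ω, exp (u * ε i ω) ∂μ ≤ exp (σ ^ 2 * u ^ 2 / 2))
    (H : Matrix (Fin n) (Fin n) ℝ) (hsymm : Hᵀ = H) (hidem : H * H = H)
    (m : ℕ) (htr : H.trace = m)
    (a : ℝ) (ha : a ∈ Set.Ioo (0 : ℝ) 1) :
    ∫ ω, exp (a / (2 * σ ^ 2) * quadf H fun i => ε i ω) ∂μ ≤
      exp (-((m : ℝ) / 2) * Real.log (1 - a)) := by
  obtain ⟨ha0, ha1⟩ := ha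
  classical
  set F : Ω → ℝ := fun ω => exp (a / (2 * σ ^ 2) * quadf H fun i => ε i ω) with hF
  by_cases hInt : Integrable F μ
  swap
  · rw [integral_undef hInt]
    exact (exp_pos _).le
  have hσ2 : (0:ℝ) < σ ^ 2 := by positivity
  set t : ℝ := a / (2 * σ ^ 2) with ht_def
  have ht : 0 < t := by positivity
  set s : ℝ := Real.sqrt a / σ with hs_def
  have hss : s ^ 2 = a / σ ^ 2 := by
    rw [hs_def, div_pow, Real.sq_sqrt ha0.le]
  have hs2 : s ^ 2 / 2 = t := by
    rw [hss, ht_def]; ring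
  have hσs : ∀ u : ℝ, σ ^ 2 * (s * u) ^ 2 / 2 = a / 2 * u ^ 2 := by
    intro u
    have : (s * u) ^ 2 = s ^ 2 * u ^ 2 := by ring
    rw [this, hss]
    field_simp
  set ε' : Ω → Fin n → ℝ := fun ω i => ε i ω with hε'
  have hε'm : Measurable ε' := measurable_pi_lambda _ hmeas
  have hqc : Continuous fun v : Fin n → ℝ => quadf H v := by
    show Continuous fun v : Fin n → ℝ => ∑ i, v i * ∑ j, H i j * v j
    exact continuous_finset_sum _ fun i _ =>
      (continuous_apply i).mul (continuous_finset_sum _ fun j _ =>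
        continuous_const.mul (continuous_apply j))
  have hqm : Measurable fun ω => quadf H (ε' ω) := hqc.measurable.comp hε'm
  have hFq : ∀ ω, F ω = exp (t * quadf H (ε' ω)) := fun ω => rfl
  have hFm : Measurable fun ω => ENNReal.ofReal (F ω) :=
    ENNReal.measurable_ofReal.comp (measurable_exp.comp (hqm.const_mul t))
  have hHεm : ∀ k, Measurable fun ω => (H *ᵥ ε' ω) k := by
    intro k
    show Measurable fun ω => ∑ j, H k j * ε j ω
    exact Finset.measurable_sum _ fun j _ => (hmeas j).const_mul _
  have hquad_eq : ∀ ω, quadf H (ε' ω) = ∑ k, (H *ᵥ ε' ω) k ^ 2 :=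
    fun ω => quad_eq_sumsq hsymm hidem _
  have hsym' : ∀ p q : Fin n, H p q = H q p := by
    intro p q
    conv_lhs => rw [← hsymm]
    exact Matrix.transpose_apply H p q
  set E : Fin n → ℝ → ENNReal :=
    fun j c => ∫⁻ ω, ENNReal.ofReal (exp (c * ε j ω)) ∂μ with hE
  have hexpm : ∀ (j : Fin n) (c : ℝ),
      Measurable fun ω => ENNReal.ofReal (exp (c * ε j ω)) :=
    fun j c => ENNReal.measurable_ofReal.comp (measurable_exp.comp ((hmeas j).const_mul c))
  -- product rule for independent variables
  have prodE : ∀ c : Fin n → ℝ,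
      ∫⁻ ω, ENNReal.ofReal (exp (∑ j, c j * ε j ω)) ∂μ = ∏ j, E j (c j) := by
    intro c
    have hpt : ∀ ω, ENNReal.ofReal (exp (∑ j, c j * ε j ω))
        = ∏ j, ENNReal.ofReal (exp (c j * ε j ω)) := by
      intro ω
      rw [Real.exp_sum, ENNReal.ofReal_prod_of_nonneg (fun j _ => (exp_pos _).le)]
    simp_rw [hpt]
    simp only [hE]
    set g : Fin n → Ω → ENNReal := fun j ω => ENNReal.ofReal (exp (c j * ε j ω)) with hg
    have hgmeas : ∀ j, Measurable (g j) := fun j => hexpm j (c j)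
    have hgindep : iIndepFun g μ :=
      hindep.comp (fun j (u : ℝ) => ENNReal.ofReal (exp (c j * u)))
        (fun j => ENNReal.measurable_ofReal.comp
          (measurable_exp.comp (measurable_id.const_mul _)))
    have key : ∀ S : Finset (Fin n),
        ∫⁻ ω, ∏ j ∈ S, g j ω ∂μ = ∏ j ∈ S, ∫⁻ ω, g j ω ∂μ := by
      intro S
      induction S using Finset.induction_on with
      | empty => simp
      | @insert i S0 hi ih =>
        simp only [Finset.prod_insert hi]
        have hm2 : Measurable (∏ j ∈ S0, g j) := by
          have h := Finset.measurable_prod S0 (fun j (_ : j ∈ S0) => hgmeas j)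
          have he : (∏ j ∈ S0, g j) = fun ω => ∏ j ∈ S0, g j ω := by
            ext ω
            simp [Finset.prod_apply]
          rw [he]
          exact h
        have hmul := lintegral_mul_eq_lintegral_mul_lintegral_of_indepFun (hgmeas i) hm2
          ((hgindep.indepFun_finsetProd_of_notMem hgmeas hi).symm)
        calc ∫⁻ ω, g i ω * ∏ j ∈ S0, g j ω ∂μ
            = ∫⁻ ω, (g i * ∏ j ∈ S0, g j) ω ∂μ := by
              apply lintegral_congr; intro ω
              simp [Finset.prod_apply]
          _ = (∫⁻ ω, g i ω ∂μ) * ∫⁻ ω, (∏ j ∈ S0, g j) ω ∂μ := hmul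
          _ = (∫⁻ ω, g i ω ∂μ) * ∏ j ∈ S0, ∫⁻ ω, g j ω ∂μ := by
              rw [← ih]
              congr 1
              apply lintegral_congr; intro ω
              simp [Finset.prod_apply]
    exact key Finset.univ
  have Epos : ∀ j c, 0 < E j c := by
    intro j c
    simp only [hE]
    rw [lintegral_pos_iff_support (hexpm j c)]
    have hsupp : Function.support (fun ω => ENNReal.ofReal (exp (c * ε j ω))) = Set.univ :=
      Set.eq_univ_of_forall fun ω => (ENNReal.ofReal_pos.mpr (exp_pos _)).ne'
    rw [hsupp, measure_univ]
    norm_num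
  have hFiniteF : ∫⁻ ω, ENNReal.ofReal (F ω) ∂μ < ⊤ := by
    have h := hInt.hasFiniteIntegral
    rwa [hasFiniteIntegral_iff_ofReal (ae_of_all _ fun ω => (exp_pos _).le)] at h
  have keyrow : ∀ (i : Fin n) (u : ℝ), ∏ j, E j (u * H i j) < ⊤ := by
    intro i u
    have hPE := prodE (fun j => u * H i j)
    rw [← hPE]
    have hb : ∀ ω, ENNReal.ofReal (exp (∑ j, u * H i j * ε j ω))
        ≤ ENNReal.ofReal (exp (u ^ 2 / (4 * t))) * ENNReal.ofReal (F ω) := by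
      intro ω
      rw [hFq ω, ← ENNReal.ofReal_mul (exp_pos _).le, ← Real.exp_add]
      apply ENNReal.ofReal_le_ofReal
      apply Real.exp_le_exp.mpr
      have h1 : ∑ j, u * H i j * ε j ω = u * (H *ᵥ ε' ω) i := by
        show _ = u * ∑ j, H i j * ε j ω
        rw [Finset.mul_sum]
        exact Finset.sum_congr rfl fun j _ => by ring
      rw [h1]
      have h2 : (H *ᵥ ε' ω) i ^ 2 ≤ quadf H (ε' ω) := by
        rw [hquad_eq ω]
        exact Finset.single_le_sum (f := fun k => (H *ᵥ ε' ω) k ^ 2)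
          (fun k _ => sq_nonneg _) (Finset.mem_univ i)
      have h5 : u ^ 2 / (4 * t) * (4 * t) = u ^ 2 := by field_simp
      nlinarith [sq_nonneg (2 * t * (H *ᵥ ε' ω) i - u), ht,
        mul_le_mul_of_nonneg_left h2 ht.le, h5]
    calc ∫⁻ ω, ENNReal.ofReal (exp (∑ j, u * H i j * ε j ω)) ∂μ
        ≤ ∫⁻ ω, ENNReal.ofReal (exp (u ^ 2 / (4 * t))) * ENNReal.ofReal (F ω) ∂μ :=
          lintegral_mono hb
      _ = ENNReal.ofReal (exp (u ^ 2 / (4 * t))) * ∫⁻ ω, ENNReal.ofReal (F ω) ∂μ :=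
          lintegral_const_mul _ hFm
      _ < ⊤ := ENNReal.mul_lt_top ENNReal.ofReal_lt_top hFiniteF
  have Efin : ∀ (j : Fin n) (c : ℝ), (∃ i, H i j ≠ 0) → E j c < ⊤ := by
    rintro j c ⟨i, hij⟩
    by_contra htop
    have hEj : E j (c / H i j * H i j) = ⊤ := by
      rw [div_mul_cancel₀ c hij]
      exact not_lt.mp htop |>.antisymm le_top |>.symm
    have hprod : (∏ k, E k (c / H i j * H i k)) = ⊤ := by
      rw [← Finset.mul_prod_erase Finset.univ _ (Finset.mem_univ j), hEj, ENNReal.top_mul]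
      exact (CanonicallyOrderedAdd.prod_pos.mpr fun k _ => Epos k _).ne'
    have := keyrow i (c / H i j)
    rw [hprod] at this
    exact lt_irrefl ⊤ this
  have boundE : ∀ (j : Fin n) (c : ℝ), (c = 0 ∨ ∃ i, H i j ≠ 0) →
      E j c ≤ ENNReal.ofReal (exp (σ ^ 2 * c ^ 2 / 2)) := by
    intro j c hc
    rcases hc with hc | hc
    · subst hc
      have h1 : E j 0 = 1 := by
        simp only [hE]
        simp
      rw [h1]
      rw [show σ ^ 2 * (0:ℝ) ^ 2 / 2 = 0 by ring, Real.exp_zero, ENNReal.ofReal_one]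
    · have hfin : E j c < ⊤ := Efin j c hc
      have hintg : Integrable (fun ω => exp (c * ε j ω)) μ := by
        refine ⟨(measurable_exp.comp ((hmeas j).const_mul c)).aestronglyMeasurable, ?_⟩
        rw [hasFiniteIntegral_iff_ofReal (ae_of_all _ fun ω => (exp_pos _).le)]
        simpa only [hE] using hfin
      have heq := MeasureTheory.ofReal_integral_eq_lintegral_ofReal hintg
        (ae_of_all _ fun ω => (exp_pos _).le)
      have hEe : E j c = ENNReal.ofReal (∫ ω, exp (c * ε j ω) ∂μ) := by
        simp only [hE]; rw [heq]
      rw [hEe]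
      exact ENNReal.ofReal_le_ofReal (hsub j c)
  have boundE' : ∀ (x : Fin n → ℝ) (j : Fin n),
      E j (s * (H *ᵥ x) j) ≤ ENNReal.ofReal (exp (a / 2 * (H *ᵥ x) j ^ 2)) := by
    intro x j
    have hcond : (s * (H *ᵥ x) j = 0 ∨ ∃ i, H i j ≠ 0) := by
      by_cases hall : ∀ i, H i j = 0
      · left
        have hzero : (H *ᵥ x) j = 0 := by
          show ∑ k, H j k * x k = 0
          exact Finset.sum_eq_zero fun k _ => by rw [hsym' j k, hall k, zero_mul]
        rw [hzero, mul_zero]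
      · right
        push_neg at hall
        exact hall
    calc E j (s * (H *ᵥ x) j) ≤ ENNReal.ofReal (exp (σ ^ 2 * (s * (H *ᵥ x) j) ^ 2 / 2)) :=
          boundE j _ hcond
      _ = ENNReal.ofReal (exp (a / 2 * (H *ᵥ x) j ^ 2)) := by rw [hσs ((H *ᵥ x) j)]
  -- spectral theory
  have hherm : H.IsHermitian := by
    show Hᴴ = H
    rw [Matrix.conjTranspose_eq_transpose_of_trivial]
    exact hsymm
  set V : Matrix (Fin n) (Fin n) ℝ := (hherm.eigenvectorUnitary : Matrix (Fin n) (Fin n) ℝ)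
    with hV
  set lam : Fin n → ℝ := hherm.eigenvalues with hlamdef
  have hdiag : star V * H * V = Matrix.diagonal lam := by
    have h := hherm.conjStarAlgAut_star_eigenvectorUnitary
    simpa [Unitary.conjStarAlgAut_star_apply, RCLike.ofReal_real_eq_id] using h
  have hVmem : V ∈ Matrix.unitaryGroup (Fin n) ℝ := hherm.eigenvectorUnitary.2
  have hVV : star V * V = 1 := Matrix.mem_unitaryGroup_iff'.mp hVmem
  have hVV' : V * star V = 1 := Matrix.mem_unitaryGroup_iff.mp hVmem
  have hVt : star V = Vᵀ := by
    rw [Matrix.star_eq_conjTranspose, Matrix.conjTranspose_eq_transpose_of_trivial]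
  have hDD : Matrix.diagonal lam * Matrix.diagonal lam = Matrix.diagonal lam := by
    rw [← hdiag]
    calc (star V * H * V) * (star V * H * V)
        = star V * (H * ((V * star V) * (H * V))) := by simp only [Matrix.mul_assoc]
      _ = star V * (H * (H * V)) := by rw [hVV', Matrix.one_mul]
      _ = star V * ((H * H) * V) := by rw [Matrix.mul_assoc]
      _ = star V * H * V := by rw [hidem, Matrix.mul_assoc]
  have hlam01 : ∀ k, lam k = 0 ∨ lam k = 1 := by
    intro k
    have h := congrFun (congrFun hDD k) k
    rw [Matrix.diagonal_mul_diagonal] at h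
    simp only [Matrix.diagonal_apply_eq] at h
    have h0 : lam k * (lam k - 1) = 0 := by linear_combination h
    rcases mul_eq_zero.mp h0 with h1 | h1
    · exact Or.inl h1
    · exact Or.inr (by linarith)
  have hsum : ∑ k, lam k = (m : ℝ) := by
    have h1 : (Matrix.diagonal lam).trace = (star V * H * V).trace := by rw [hdiag]
    rw [Matrix.trace_diagonal, Matrix.trace_mul_cycle, hVV', Matrix.one_mul, htr] at h1
    exact h1
  have hcardm : (Finset.univ.filter (fun k => lam k = 1)).card = m := by
    have h1 : ((Finset.univ.filter (fun k => lam k = 1)).card : ℝ) = (m : ℝ) := by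
      rw [← hsum, ← Finset.sum_filter_add_sum_filter_not Finset.univ (fun k => lam k = 1) lam]
      have h2 : ∑ k ∈ Finset.univ.filter (fun k => lam k = 1), lam k
          = ((Finset.univ.filter (fun k => lam k = 1)).card : ℝ) := by
        rw [Finset.sum_congr rfl (fun k hk => (Finset.mem_filter.mp hk).2)]
        simp
      have h3 : ∑ k ∈ Finset.univ.filter (fun k => ¬ lam k = 1), lam k = 0 := by
        apply Finset.sum_eq_zero
        intro k hk
        rcases hlam01 k with h | h
        · exact h
        · exact absurd h (Finset.mem_filter.mp hk).2
      rw [h2, h3, add_zero]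
    exact_mod_cast h1
  have hdetV : V.det ≠ 0 ∧ |V.det| = 1 := by
    have h1 : V.det * V.det = 1 := by
      have h := congrArg Matrix.det hVV'
      rwa [Matrix.det_mul, hVt, Matrix.det_transpose, Matrix.det_one] at h
    constructor
    · intro h
      rw [h, mul_zero] at h1
      exact zero_ne_one h1
    · rcases mul_self_eq_one_iff.mp h1 with h | h <;> rw [h] <;> norm_num
  have hmap : Measure.map (⇑(Matrix.toLin' V)) volume = volume := by
    rw [Real.map_matrix_volume_pi_eq_smul_volume_pi hdetV.1]
    rw [abs_inv, hdetV.2]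
    norm_num
  have hqmx : Measurable fun x : Fin n → ℝ =>
      ENNReal.ofReal ((∏ k, gφ (x k)) * exp (a / 2 * quadf H x)) :=
    ENNReal.measurable_ofReal.comp
      ((Finset.measurable_prod _ fun k _ =>
          gφ_continuous.measurable.comp (measurable_pi_apply k)).mul
        (measurable_exp.comp (hqc.measurable.const_mul _)))
  have factC : ∫⁻ x : Fin n → ℝ, ENNReal.ofReal ((∏ k, gφ (x k)) * exp (a / 2 * quadf H x))
      = ENNReal.ofReal ((Real.sqrt (1 - a))⁻¹ ^ m) := by
    have hchg : ∫⁻ x : Fin n → ℝ, ENNReal.ofReal ((∏ k, gφ (x k)) * exp (a / 2 * quadf H x))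
        = ∫⁻ y : Fin n → ℝ,
            ENNReal.ofReal ((∏ k, gφ ((V *ᵥ y) k)) * exp (a / 2 * quadf H (V *ᵥ y))) := by
      conv_lhs => rw [← hmap]
      rw [lintegral_map hqmx (Matrix.toLin' V).continuous_on_pi.measurable]
      apply lintegral_congr
      intro y
      rw [Matrix.toLin'_apply]
    rw [hchg]
    have hpt : ∀ y : Fin n → ℝ,
        (∏ k, gφ ((V *ᵥ y) k)) * exp (a / 2 * quadf H (V *ᵥ y))
          = ∏ k, gφ (y k) * exp (0 * y k + (a / 2 * lam k) * y k ^ 2) := by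
      intro y
      have h1 : quadf H (V *ᵥ y) = ∑ k, lam k * y k ^ 2 := by
        show (V *ᵥ y) ⬝ᵥ (H *ᵥ (V *ᵥ y)) = _
        rw [conj_dot, ← hVt, hdiag]
        show ∑ k, y k * (Matrix.diagonal lam *ᵥ y) k = _
        exact Finset.sum_congr rfl fun k _ => by rw [Matrix.mulVec_diagonal]; ring
      have h2 : ∑ k, ((V *ᵥ y) k) ^ 2 = ∑ k, y k ^ 2 := by
        have h := conj_dot 1 V y
        rw [Matrix.mul_one, ← hVt, hVV] at h
        have hL : (V *ᵥ y) ⬝ᵥ (1 *ᵥ (V *ᵥ y)) = ∑ k, ((V *ᵥ y) k) ^ 2 := by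
          rw [Matrix.one_mulVec]
          show ∑ k, (V *ᵥ y) k * (V *ᵥ y) k = _
          exact Finset.sum_congr rfl fun k _ => (pow_two _).symm
        have hR : y ⬝ᵥ ((1 : Matrix (Fin n) (Fin n) ℝ) *ᵥ y) = ∑ k, y k ^ 2 := by
          rw [Matrix.one_mulVec]
          show ∑ k, y k * y k = _
          exact Finset.sum_congr rfl fun k _ => (pow_two _).symm
        rw [hL, hR] at h
        exact h
      rw [Finset.prod_mul_distrib, ← Real.exp_sum, h1, prod_gφ (V *ᵥ y), prod_gφ y, h2]
      congr 2
      rw [Finset.mul_sum]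
      exact Finset.sum_congr rfl fun k _ => by ring
    simp_rw [hpt]
    rw [quadGaussEval ha1 lam hlam01, hcardm]
  -- the Gaussian linearization chain
  have hGm : Measurable (Function.uncurry fun (ω : Ω) (x : Fin n → ℝ) =>
      ENNReal.ofReal (∏ k, gφ (x k) * exp (s * (H *ᵥ ε' ω) k * x k + 0 * x k ^ 2))) := by
    apply ENNReal.measurable_ofReal.comp
    apply Finset.measurable_prod
    intro k _
    apply Measurable.mul
    · exact gφ_continuous.measurable.comp ((measurable_pi_apply k).comp measurable_snd)
    · apply measurable_exp.comp
      apply Measurable.add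
      · exact (((hHεm k).comp measurable_fst).const_mul s).mul
          ((measurable_pi_apply k).comp measurable_snd)
      · exact (((measurable_pi_apply k).comp measurable_snd).pow_const 2).const_mul 0
  have key : ∫⁻ ω, ENNReal.ofReal (F ω) ∂μ
      ≤ ENNReal.ofReal ((Real.sqrt (1 - a))⁻¹ ^ m) := by
    calc ∫⁻ ω, ENNReal.ofReal (F ω) ∂μ
        = ∫⁻ ω, (∫⁻ x : Fin n → ℝ, ENNReal.ofReal
            (∏ k, gφ (x k) * exp (s * (H *ᵥ ε' ω) k * x k + 0 * x k ^ 2))) ∂μ := by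
          apply lintegral_congr
          intro ω
          rw [hFq ω, hquad_eq ω]
          exact (linearize hs2 (fun k => (H *ᵥ ε' ω) k)).symm
      _ = ∫⁻ x : Fin n → ℝ, ∫⁻ ω, ENNReal.ofReal
            (∏ k, gφ (x k) * exp (s * (H *ᵥ ε' ω) k * x k + 0 * x k ^ 2)) ∂μ :=
          lintegral_lintegral_swap hGm.aemeasurable
      _ ≤ ∫⁻ x : Fin n → ℝ, ENNReal.ofReal ((∏ k, gφ (x k)) * exp (a / 2 * quadf H x)) := by
          apply lintegral_mono
          intro x
          have hPE := prodE (fun j => s * (H *ᵥ x) j)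
          have hsplit : ∀ ω, ENNReal.ofReal
              (∏ k, gφ (x k) * exp (s * (H *ᵥ ε' ω) k * x k + 0 * x k ^ 2))
              = ENNReal.ofReal (∏ k, gφ (x k))
                * ENNReal.ofReal (exp (∑ j, s * (H *ᵥ x) j * ε j ω)) := by
            intro ω
            rw [← ENNReal.ofReal_mul (Finset.prod_nonneg fun k _ => (gφ_pos _).le)]
            congr 1
            rw [Finset.prod_mul_distrib, ← Real.exp_sum]
            congr 1
            have h4 : ∀ k, s * (H *ᵥ ε' ω) k * x k + 0 * x k ^ 2
                = s * ((H *ᵥ ε' ω) k * x k) := fun k => by ring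
            rw [Finset.sum_congr rfl fun k _ => h4 k, ← Finset.mul_sum,
              pair_swap hsymm (ε' ω) x, Finset.mul_sum]
            refine congrArg rexp (Finset.sum_congr rfl fun j _ => ?_)
            show s * ((H *ᵥ x) j * ε j ω) = _
            ring
          calc ∫⁻ ω, ENNReal.ofReal
                (∏ k, gφ (x k) * exp (s * (H *ᵥ ε' ω) k * x k + 0 * x k ^ 2)) ∂μ
              = ENNReal.ofReal (∏ k, gφ (x k))
                  * ∫⁻ ω, ENNReal.ofReal (exp (∑ j, s * (H *ᵥ x) j * ε j ω)) ∂μ := by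
                simp_rw [hsplit]
                exact lintegral_const_mul _ (ENNReal.measurable_ofReal.comp
                  (measurable_exp.comp
                    (Finset.measurable_sum _ fun j _ => (hmeas j).const_mul _)))
            _ = ENNReal.ofReal (∏ k, gφ (x k)) * ∏ j, E j (s * (H *ᵥ x) j) := by rw [hPE]
            _ ≤ ENNReal.ofReal (∏ k, gφ (x k))
                  * ∏ j, ENNReal.ofReal (exp (a / 2 * (H *ᵥ x) j ^ 2)) :=
                mul_le_mul_right (Finset.prod_le_prod' fun j _ => boundE' x j) _
            _ = ENNReal.ofReal ((∏ k, gφ (x k)) * exp (a / 2 * quadf H x)) := by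
                rw [← ENNReal.ofReal_prod_of_nonneg (fun j _ => (exp_pos _).le),
                  ← Real.exp_sum,
                  ← ENNReal.ofReal_mul (Finset.prod_nonneg fun k _ => (gφ_pos _).le)]
                congr 2
                rw [quad_eq_sumsq hsymm hidem x, Finset.mul_sum]
      _ = ENNReal.ofReal ((Real.sqrt (1 - a))⁻¹ ^ m) := factC
  have h1a : (0:ℝ) < 1 - a := by linarith
  have hRHS : (Real.sqrt (1 - a))⁻¹ ^ m = exp (-((m : ℝ) / 2) * Real.log (1 - a)) := by
    rw [show Real.sqrt (1 - a) = exp (Real.log (1 - a) * (1 / 2)) from by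
      rw [Real.sqrt_eq_rpow, Real.rpow_def_of_pos h1a]]
    rw [← Real.exp_neg, ← Real.exp_nat_mul]
    congr 1
    ring
  rw [integral_eq_lintegral_of_nonneg_ae (ae_of_all _ fun ω => (exp_pos _).le)
    hInt.aestronglyMeasurable, ← hRHS]
  refine le_trans (ENNReal.toReal_mono ENNReal.ofReal_ne_top key) ?_
  rw [ENNReal.toReal_ofReal (by positivity)]


end
end

section
/- Suppose the loss ℓ is convex on ℝ^p (equivalently the total cumulant g is convex) and a ∈ (0,1). Then on the event {|Xᵀε|_∞ ≤ aλ}, the difference Δ = β̂ − β° between the Lasso estimator and the true parameter belongs to the signed pseudo-cone C_a; in particular (1−a)|Δ_{T̄}|₁ ≤ (1+a)|Δ_T|₁. -/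
open MeasureTheory Real Matrix Finset Filter ProbabilityTheory

noncomputable section

/-- If `f` has derivative `d` at `0` and its slopes from the right are `≤ c`, then `d ≤ c`. -/
lemma deriv_le_of_slope (f : ℝ → ℝ) {d c : ℝ} (hf : HasDerivAt f d 0)
    (h : ∀ s ∈ Set.Ioo (0:ℝ) 1, f s - f 0 ≤ c * s) : d ≤ c := by
  have ht : Tendsto (slope f 0) (nhdsWithin 0 (Set.Ioi 0)) (nhds d) :=
    (hasDerivAt_iff_tendsto_slope.1 hf).mono_left
      (nhdsWithin_mono 0 (fun x hx => ne_of_gt hx))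
  refine le_of_tendsto ht ?_
  filter_upwards [Ioo_mem_nhdsGT_of_mem (Set.mem_Ico.2 ⟨le_refl (0:ℝ), one_pos⟩)] with s hs
  have hslope : slope f 0 s = (f s - f 0) / s := by
    rw [slope_def_field]; ring_nf
  rw [hslope, div_le_iff₀ hs.1]
  exact h s hs

lemma le_deriv_of_slope (f : ℝ → ℝ) {d c : ℝ} (hf : HasDerivAt f d 0)
    (h : ∀ s ∈ Set.Ioo (0:ℝ) 1, c * s ≤ f s - f 0) : c ≤ d := by
  have := deriv_le_of_slope (fun s => -f s) (c := -c) hf.neg (by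
    intro s hs
    have := h s hs
    show -f s - -f 0 ≤ -c * s
    linarith)
  linarith

lemma sum_transpose_swap {n p : ℕ} (X : Matrix (Fin n) (Fin p) ℝ) (v : Fin p → ℝ)
    (c : Fin n → ℝ) : ∑ j, v j * (Xᵀ *ᵥ c) j = ∑ i, c i * (X *ᵥ v) i := by
  simp only [Matrix.mulVec, dotProduct, Matrix.transpose_apply, Finset.mul_sum]
  rw [Finset.sum_comm]
  exact Finset.sum_congr rfl fun i _ => Finset.sum_congr rfl fun j _ => by ring

/-- Directional derivative of the GLM loss. -/
lemma glm_hasDerivAt {n p : ℕ} (X : Matrix (Fin n) (Fin p) ℝ) (γ : ℝ → ℝ)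
    (hγ : Differentiable ℝ γ) (yv : Fin n → ℝ) (β v : Fin p → ℝ) :
    HasDerivAt (fun s : ℝ => glmLoss X γ yv (β + s • v))
      (∑ j, v j * (Xᵀ *ᵥ (gdot X γ β - yv)) j) 0 := by
  have heq : ∑ j, v j * (Xᵀ *ᵥ (gdot X γ β - yv)) j
      = ∑ i, (deriv γ ((X *ᵥ β) i) - yv i) * (X *ᵥ v) i := by
    rw [sum_transpose_swap]
    exact Finset.sum_congr rfl fun i _ => by simp [gdot]
  rw [heq]
  simp only [glmLoss, Matrix.mulVec_add, Matrix.mulVec_smul, Pi.add_apply, Pi.smul_apply,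
    smul_eq_mul]
  apply HasDerivAt.fun_sum
  intro i _
  set A := (X *ᵥ β) i with hA
  set B := (X *ᵥ v) i with hB
  have hlin : HasDerivAt (fun s : ℝ => A + s * B) B 0 := by
    simpa using ((hasDerivAt_id (0:ℝ)).mul_const B).const_add A
  have hc : HasDerivAt (fun s : ℝ => γ (A + s * B)) (deriv γ A * B) 0 := by
    have := (hγ (A + 0 * B)).hasDerivAt.comp 0 hlin
    simpa [Function.comp_def] using this
  have := hc.fun_sub (hlin.const_mul (yv i))
  convert this using 1
  ring

/-- on `{|Xᵀε|_∞ ≤ aλ}`, the Lasso error `Δ = β̂ − β°` belongs to the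
signed pseudo-cone `C_a`; in particular `(1−a)|Δ_{T̄}|₁ ≤ (1+a)|Δ_T|₁`. -/
theorem lasso_error_in_cone {n p : ℕ} (X : Matrix (Fin n) (Fin p) ℝ)
    (hX : ∀ j, ∑ i, (X i j) ^ 2 = 1)
    (γ : ℝ → ℝ) (hγ : Differentiable ℝ γ) (β0 : Fin p → ℝ)
    (yv : Fin n → ℝ) (lam : ℝ) (hlam : 0 < lam)
    (hconv : ConvexOn ℝ Set.univ (glmLoss X γ yv))
    (a : ℝ) (ha : a ∈ Set.Ioo (0 : ℝ) 1)
    (bhat : Fin p → ℝ)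
    (hbhat : ∀ β, glmLoss X γ yv bhat + lam * l1 bhat ≤ glmLoss X γ yv β + lam * l1 β)
    (hev : linf (Xᵀ *ᵥ (yv - gdot X γ β0)) ≤ a * lam) :
    bhat - β0 ∈ cone X γ β0 a ∧
      (1 - a) * l1on (suppF β0)ᶜ (bhat - β0) ≤ (1 + a) * l1on (suppF β0) (bhat - β0) := by
  obtain ⟨ha0, ha1⟩ := ha
  set T := suppF β0 with hT
  set Δ := bhat - β0 with hΔ
  have hβ : β0 + Δ = bhat := by funext k; simp [hΔ]
  -- bound on each coordinate of z := Xᵀ(y - γ'(Xβ0))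
  have hz : ∀ j, |(Xᵀ *ᵥ (yv - gdot X γ β0)) j| ≤ a * lam := by
    intro j
    refine le_trans ?_ hev
    rw [linf]
    exact le_ciSup (f := fun k => |(Xᵀ *ᵥ (yv - gdot X γ β0)) k|)
      (Set.Finite.bddAbove (Set.finite_range _)) j
  have hT0 : ∀ j, j ∉ T → β0 j = 0 := by
    intro j hj
    by_contra hne
    exact hj (Finset.mem_filter.2 ⟨Finset.mem_univ j, hne⟩)
  -- Part 2: the ℓ1 cone inequality
  have hmain : (1 - a) * l1on Tᶜ Δ ≤ (1 + a) * l1on T Δ := by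
    -- directional derivative at β0 in direction Δ
    set D := ∑ j, Δ j * (Xᵀ *ᵥ (gdot X γ β0 - yv)) j with hD
    have hψd : HasDerivAt (fun s : ℝ => glmLoss X γ yv (β0 + s • Δ)) D 0 :=
      glm_hasDerivAt X γ hγ yv β0 Δ
    have hψ0 : glmLoss X γ yv (β0 + (0:ℝ) • Δ) = glmLoss X γ yv β0 := by
      norm_num
    -- convexity: slope bound
    have hDle : D ≤ glmLoss X γ yv bhat - glmLoss X γ yv β0 := by
      apply deriv_le_of_slope _ hψd
      intro t ht
      rw [hψ0]
      have hcomb : (1 - t) • β0 + t • bhat = β0 + t • Δ := by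
        funext k
        simp only [Pi.add_apply, Pi.smul_apply, hΔ, Pi.sub_apply, smul_eq_mul]
        ring
      have := hconv.2 (Set.mem_univ β0) (Set.mem_univ bhat)
        (by linarith [ht.2] : (0:ℝ) ≤ 1 - t) (le_of_lt ht.1) (by ring)
      rw [hcomb] at this
      simp only [smul_eq_mul] at this
      linarith
    -- lower bound on D
    have hDlow : -(a * lam * l1 Δ) ≤ D := by
      have hterm : ∀ j : Fin p, -(a * lam * |Δ j|) ≤ Δ j * (Xᵀ *ᵥ (gdot X γ β0 - yv)) j := by
        intro j
        have h1 : (Xᵀ *ᵥ (gdot X γ β0 - yv)) j = -((Xᵀ *ᵥ (yv - gdot X γ β0)) j) := by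
          simp only [Matrix.mulVec_sub, Pi.sub_apply]
          ring
        rw [h1]
        have h2 : Δ j * (Xᵀ *ᵥ (yv - gdot X γ β0)) j ≤ |Δ j| * (a * lam) := by
          calc Δ j * (Xᵀ *ᵥ (yv - gdot X γ β0)) j
              ≤ |Δ j * (Xᵀ *ᵥ (yv - gdot X γ β0)) j| := le_abs_self _
            _ = |Δ j| * |(Xᵀ *ᵥ (yv - gdot X γ β0)) j| := abs_mul _ _
            _ ≤ |Δ j| * (a * lam) := by
                exact mul_le_mul_of_nonneg_left (hz j) (abs_nonneg _)
        linarith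
      calc -(a * lam * l1 Δ) = ∑ j, -(a * lam * |Δ j|) := by
            simp [l1, Finset.mul_sum]
        _ ≤ D := Finset.sum_le_sum fun j _ => hterm j
    -- minimality at β0
    have hmin := hbhat β0
    -- ℓ1 decompositions
    have hsplit : ∀ w : Fin p → ℝ, l1 w = l1on T w + l1on Tᶜ w := by
      intro w
      rw [l1, l1on, l1on, Finset.sum_add_sum_compl]
    have hbc : l1on Tᶜ bhat = l1on Tᶜ Δ := by
      refine Finset.sum_congr rfl fun j hj => ?_
      rw [hΔ, Pi.sub_apply, hT0 j (Finset.mem_compl.1 hj), sub_zero]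
    have hb0c : l1on Tᶜ β0 = 0 := by
      refine Finset.sum_eq_zero fun j hj => ?_
      rw [hT0 j (Finset.mem_compl.1 hj), abs_zero]
    have htri : l1on T β0 ≤ l1on T bhat + l1on T Δ := by
      rw [l1on, l1on, l1on, ← Finset.sum_add_distrib]
      refine Finset.sum_le_sum fun j _ => ?_
      have := abs_sub_abs_le_abs_sub (β0 j) (bhat j)
      have h2 : |β0 j - bhat j| = |Δ j| := by
        rw [hΔ, Pi.sub_apply, abs_sub_comm]
      linarith
    have key : lam * (l1on Tᶜ Δ - l1on T Δ) ≤ a * lam * (l1on T Δ + l1on Tᶜ Δ) := by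
      have h1 : lam * (l1 bhat - l1 β0) ≤ a * lam * l1 Δ := by nlinarith [hmin, hDle, hDlow]
      rw [hsplit bhat, hsplit β0, hsplit Δ, hbc, hb0c] at h1
      nlinarith [h1, htri, hlam.le]
    nlinarith [key, hlam]
  refine ⟨?_, hmain⟩
  simp only [cone, Set.mem_setOf_eq]
  constructor
  · rw [div_mul_eq_mul_div, le_div_iff₀ (by linarith : (0:ℝ) < 1 - a)]
    linarith [hmain]
  · -- sign condition
    intro j hj
    rw [hβ]
    have hβ0j : β0 j = 0 := hT0 j hj
    have hΔj : Δ j = bhat j := by rw [hΔ, Pi.sub_apply, hβ0j, sub_zero]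
    by_cases hbj : bhat j = 0
    · rw [hΔj, hbj, zero_mul]
    · set g := (Xᵀ *ᵥ (gdot X γ bhat - yv)) j with hg
      -- KKT-type inequality from minimality at bhat
      have hkkt : lam * |bhat j| ≤ -(bhat j * g) := by
        set v : Fin p → ℝ := fun k => if k = j then -(bhat j) else 0 with hv
        have hd : HasDerivAt (fun s : ℝ => glmLoss X γ yv (bhat + s • v))
            (∑ k, v k * (Xᵀ *ᵥ (gdot X γ bhat - yv)) k) 0 :=
          glm_hasDerivAt X γ hγ yv bhat v
        have hsum : (∑ k, v k * (Xᵀ *ᵥ (gdot X γ bhat - yv)) k) = -(bhat j * g) := by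
          rw [show (∑ k, v k * (Xᵀ *ᵥ (gdot X γ bhat - yv)) k)
              = ∑ k, (if k = j then -(bhat j) * (Xᵀ *ᵥ (gdot X γ bhat - yv)) k else 0) by
            refine Finset.sum_congr rfl fun k _ => ?_
            by_cases hk : k = j <;> simp [hv, hk]]
          rw [Finset.sum_ite_eq' Finset.univ j]
          simp [hg]
        rw [hsum] at hd
        apply le_deriv_of_slope _ hd
        intro s hs
        have hl1 : l1 (bhat + s • v) = l1 bhat - s * |bhat j| := by
          have hterm : ∀ k, |(bhat + s • v) k| = |bhat k| - (if k = j then s * |bhat j| else 0) := by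
            intro k
            by_cases hk : k = j
            · subst hk
              simp only [Pi.add_apply, Pi.smul_apply, hv, smul_eq_mul, reduceIte]
              rw [show bhat k + s * -(bhat k) = (1 - s) * bhat k by ring, abs_mul,
                abs_of_nonneg (by linarith [hs.2] : (0:ℝ) ≤ 1 - s)]
              ring
            · simp [hv, hk]
          rw [l1, l1]
          simp only [hterm]
          rw [Finset.sum_sub_distrib, Finset.sum_ite_eq' Finset.univ j]
          simp
        have hm := hbhat (bhat + s • v)
        rw [hl1] at hm
        have h0 : glmLoss X γ yv (bhat + (0:ℝ) • v) = glmLoss X γ yv bhat := by norm_num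
        rw [h0]
        nlinarith [hm, hlam]
      -- combine with the event bound
      have hdec : (Xᵀ *ᵥ (gdot X γ bhat - gdot X γ β0)) j
          = g + (Xᵀ *ᵥ (yv - gdot X γ β0)) j := by
        rw [hg]
        simp only [Matrix.mulVec_sub, Pi.sub_apply]
        ring
      rw [hdec, hΔj]
      have h2 : bhat j * (Xᵀ *ᵥ (yv - gdot X γ β0)) j ≤ |bhat j| * (a * lam) := by
        calc bhat j * (Xᵀ *ᵥ (yv - gdot X γ β0)) j
            ≤ |bhat j * (Xᵀ *ᵥ (yv - gdot X γ β0)) j| := le_abs_self _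
          _ = |bhat j| * |(Xᵀ *ᵥ (yv - gdot X γ β0)) j| := abs_mul _ _
          _ ≤ |bhat j| * (a * lam) := mul_le_mul_of_nonneg_left (hz j) (abs_nonneg _)
      nlinarith [hkkt, h2, mul_nonneg (abs_nonneg (bhat j)) hlam.le]

end
end
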